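/- Let g : ℝ² → ℝ be continuous, let h > 0, and define R(x, y) = ∫₀^y g(x, s) ds. Define M̄(h) = ∫_{Γ_h} R(x, y) dx and M(h) = ∫_{Γ_h} g(x, y) dt, where Γ_h is the clockwise first-quadrant quarter arc of x² + y² = 2h, parametrized by time (ẋ = y, ẏ = −x). If g is C¹, then M(h) = dM̄/dh. -/

import Mathlib

open Real

open Real MeasureTheory intervalIntegral Metric Set

noncomputable def Tmap (u : ℝ) : ℝ × ℝ →L[ℝ] ℝ × ℝ :=
  (ContinuousLinearMap.fst ℝ ℝ ℝ).prod 0 +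
    u • ((0 : ℝ × ℝ →L[ℝ] ℝ).prod (ContinuousLinearMap.snd ℝ ℝ ℝ))

lemma Tmap_apply (u : ℝ) (v : ℝ × ℝ) : Tmap u v = (v.1, u * v.2) := by
  simp [Tmap, Prod.smul_def]

lemma Tmap_cont : Continuous fun u : ℝ => Tmap u :=
  continuous_const.add (continuous_id.smul continuous_const)

noncomputable def Amap (g : ℝ × ℝ → ℝ) (q : ℝ × ℝ) (u : ℝ) : ℝ × ℝ →L[ℝ] ℝ :=
  q.2 • ((fderiv ℝ g (q.1, u * q.2)).comp (Tmap u)) +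
    g (q.1, u * q.2) • ContinuousLinearMap.snd ℝ ℝ ℝ

lemma Amap_cont {g : ℝ × ℝ → ℝ} (hgc : Continuous g) (hg : ContDiff ℝ 1 g) :
    Continuous fun z : (ℝ × ℝ) × ℝ => Amap g z.1 z.2 := by
  have hin : Continuous fun z : (ℝ × ℝ) × ℝ => ((z.1.1, z.2 * z.1.2) : ℝ × ℝ) := by fun_prop
  have h1 : Continuous fun z : (ℝ × ℝ) × ℝ =>
      (fderiv ℝ g (z.1.1, z.2 * z.1.2)).comp (Tmap z.2) :=
    ((hg.continuous_fderiv one_ne_zero).comp hin).clm_comp (Tmap_cont.comp continuous_snd)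
  exact ((continuous_fst.snd).smul h1).add ((hgc.comp hin).smul continuous_const)

lemma hasFDerivAt_Fq {g : ℝ × ℝ → ℝ} (hg : ContDiff ℝ 1 g) (u : ℝ) (q : ℝ × ℝ) :
    HasFDerivAt (fun q : ℝ × ℝ => q.2 * g (q.1, u * q.2)) (Amap g q u) q := by
  have hin : HasFDerivAt (fun q : ℝ × ℝ => ((q.1, u * q.2) : ℝ × ℝ)) (Tmap u) q := by
    have h : (fun q : ℝ × ℝ => ((q.1, u * q.2) : ℝ × ℝ)) = ⇑(Tmap u) :=
      funext fun v => (Tmap_apply u v).symm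
    rw [h]; exact (Tmap u).hasFDerivAt
  have hgd : HasFDerivAt g (fderiv ℝ g (q.1, u * q.2)) ((q.1, u * q.2) : ℝ × ℝ) :=
    (hg.differentiable one_ne_zero (q.1, u * q.2)).hasFDerivAt
  have h2 : HasFDerivAt (fun q : ℝ × ℝ => g (q.1, u * q.2))
      ((fderiv ℝ g (q.1, u * q.2)).comp (Tmap u)) q := hgd.comp q hin
  have h1 : HasFDerivAt (fun q : ℝ × ℝ => q.2) (ContinuousLinearMap.snd ℝ ℝ ℝ) q :=
    (ContinuousLinearMap.snd ℝ ℝ ℝ).hasFDerivAt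
  exact h1.mul h2

noncomputable def Lmap (g : ℝ × ℝ → ℝ) (p : ℝ × ℝ) : ℝ × ℝ →L[ℝ] ℝ :=
  ∫ u in (0:ℝ)..1, Amap g p u

lemma Lmap_cont {g : ℝ × ℝ → ℝ} (hgc : Continuous g) (hg : ContDiff ℝ 1 g) :
    Continuous (Lmap g) :=
  continuous_parametric_intervalIntegral_of_continuous' (f := Amap g) (Amap_cont hgc hg) 0 1

lemma R_repr {g : ℝ × ℝ → ℝ} (hgc : Continuous g) (q : ℝ × ℝ) :
    (∫ s in (0:ℝ)..q.2, g (q.1, s)) = ∫ u in (0:ℝ)..1, q.2 * g (q.1, u * q.2) := by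
  have h := intervalIntegral.integral_comp_smul_deriv (a := (0:ℝ)) (b := 1)
    (f := fun u => u * q.2) (f' := fun _ => q.2) (g := fun s => g (q.1, s))
    (fun x _ => hasDerivAt_mul_const q.2) continuousOn_const (by fun_prop)
  simp only [zero_mul, one_mul, smul_eq_mul] at h
  exact h.symm

lemma hasFDerivAt_primitive {g : ℝ × ℝ → ℝ} (hgc : Continuous g) (hg : ContDiff ℝ 1 g)
    (p : ℝ × ℝ) :
    HasFDerivAt (fun q : ℝ × ℝ => ∫ s in (0:ℝ)..q.2, g (q.1, s)) (Lmap g p) p := by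
  have hrepr : (fun q : ℝ × ℝ => ∫ s in (0:ℝ)..q.2, g (q.1, s)) =
      fun q : ℝ × ℝ => ∫ u in (0:ℝ)..1, q.2 * g (q.1, u * q.2) :=
    funext fun q => R_repr hgc q
  rw [hrepr]
  -- bound on a compact set
  obtain ⟨C, hC⟩ := ((isCompact_closedBall p 1).prod isCompact_Icc).exists_bound_of_continuousOn
    (s := closedBall p 1 ×ˢ Icc (0:ℝ) 1) ((Amap_cont hgc hg).continuousOn)
  have hmeas : ∀ q : ℝ × ℝ, Continuous fun u => q.2 * g (q.1, u * q.2) := by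
    intro q; fun_prop
  have := intervalIntegral.hasFDerivAt_integral_of_dominated_of_fderiv_le
    (𝕜 := ℝ) (μ := volume) (F := fun (q : ℝ × ℝ) u => q.2 * g (q.1, u * q.2))
    (F' := Amap g) (x₀ := p) (a := 0) (b := 1) (bound := fun _ => C) (ball_mem_nhds p one_pos)
    (Filter.Eventually.of_forall fun q => (hmeas q).aestronglyMeasurable)
    ((hmeas p).intervalIntegrable _ _)
    (((Amap_cont hgc hg).comp (continuous_const.prodMk continuous_id)).aestronglyMeasurable)
    (Filter.Eventually.of_forall fun u hu q hq => by
      refine hC (q, u) ⟨ball_subset_closedBall hq, ?_⟩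
      rw [uIoc_of_le (by norm_num : (0:ℝ) ≤ 1)] at hu
      exact ⟨hu.1.le, hu.2⟩)
    (intervalIntegrable_const)
    (Filter.Eventually.of_forall fun u hu q hq => hasFDerivAt_Fq hg u q)
  exact this

lemma clm_pair (Lc : ℝ × ℝ →L[ℝ] ℝ) (a b : ℝ) :
    Lc (a, b) = a * Lc (1, 0) + b * Lc (0, 1) := by
  have h : ((a, b) : ℝ × ℝ) = a • ((1:ℝ), (0:ℝ)) + b • ((0:ℝ), (1:ℝ)) := by
    simp [Prod.smul_def, Prod.ext_iff]
  rw [h, map_add, _root_.map_smul, _root_.map_smul, smul_eq_mul, smul_eq_mul]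

lemma Lmap_apply_eb {g : ℝ × ℝ → ℝ} (hgc : Continuous g) (hg : ContDiff ℝ 1 g) (p : ℝ × ℝ) :
    Lmap g p (0, 1) = g p := by
  have hAint : IntervalIntegrable (Amap g p) volume 0 1 :=
    (((Amap_cont hgc hg).comp (continuous_const.prodMk continuous_id)).intervalIntegrable _ _)
  rw [Lmap, ContinuousLinearMap.intervalIntegral_apply hAint]
  have hgd : ∀ u : ℝ, HasDerivAt (fun u : ℝ => u * g (p.1, u * p.2))
      (1 * g (p.1, u * p.2) + u * ((fderiv ℝ g (p.1, u * p.2)) (0, p.2))) u := by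
    intro u
    have hcurve : HasDerivAt (fun u : ℝ => ((p.1, u * p.2) : ℝ × ℝ)) ((0:ℝ), p.2) u :=
      (hasDerivAt_const u p.1).prodMk (hasDerivAt_mul_const p.2)
    have h2 : HasDerivAt (fun u : ℝ => g (p.1, u * p.2))
        ((fderiv ℝ g (p.1, u * p.2)) (0, p.2)) u :=
      ((hg.differentiable one_ne_zero (p.1, u * p.2)).hasFDerivAt).comp_hasDerivAt u hcurve
    exact (hasDerivAt_id u).mul h2
  have heq : ∀ u : ℝ, (Amap g p u) (0, 1) =
      1 * g (p.1, u * p.2) + u * ((fderiv ℝ g (p.1, u * p.2)) (0, p.2)) := by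
    intro u
    have h1 : ((0:ℝ), u) = u • ((0:ℝ), (1:ℝ)) := by simp [Prod.smul_def]
    have h2 : ((0:ℝ), p.2) = p.2 • ((0:ℝ), (1:ℝ)) := by simp [Prod.smul_def]
    simp only [Amap, ContinuousLinearMap.add_apply, ContinuousLinearMap.smul_apply,
      ContinuousLinearMap.comp_apply, Tmap_apply, ContinuousLinearMap.coe_snd',
      smul_eq_mul, mul_one]
    rw [h1, h2, _root_.map_smul, _root_.map_smul, smul_eq_mul, smul_eq_mul]
    ring
  calc (∫ u in (0:ℝ)..1, (Amap g p u) (0, 1))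
      = ∫ u in (0:ℝ)..1, (1 * g (p.1, u * p.2) + u * ((fderiv ℝ g (p.1, u * p.2)) (0, p.2))) :=
        intervalIntegral.integral_congr (fun u _ => heq u)
    _ = 1 * g (p.1, 1 * p.2) - 0 * g (p.1, 0 * p.2) := by
        refine intervalIntegral.integral_eq_sub_of_hasDerivAt (fun u _ => hgd u) ?_
        apply Continuous.intervalIntegrable
        have : Continuous (fderiv ℝ g) := hg.continuous_fderiv one_ne_zero
        fun_prop
    _ = g p := by simp

theorem time_integral_is_derivative_of_line_integral
    (g : ℝ × ℝ → ℝ) (hgc : Continuous g) (hg : ContDiff ℝ 1 g)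
    (h : ℝ) (hh : 0 < h)
    (R : ℝ × ℝ → ℝ) (hR : ∀ x y : ℝ, R (x, y) = ∫ s in (0:ℝ)..y, g (x, s))
    (Mbar M : ℝ → ℝ)
    (hMbar : ∀ h' : ℝ, Mbar h' = ∫ t in (0:ℝ)..(π/2),
      R (Real.sqrt (2*h') * Real.sin t, Real.sqrt (2*h') * Real.cos t) *
        (Real.sqrt (2*h') * Real.cos t))
    (hM : ∀ h' : ℝ, M h' = ∫ t in (0:ℝ)..(π/2),
      g (Real.sqrt (2*h') * Real.sin t, Real.sqrt (2*h') * Real.cos t)) :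
    HasDerivAt Mbar (M h) h := by
  have hRfun : R = fun q : ℝ × ℝ => ∫ s in (0:ℝ)..q.2, g (q.1, s) :=
    funext fun q => hR q.1 q.2
  have hL : ∀ p : ℝ × ℝ, HasFDerivAt R (Lmap g p) p := by
    rw [hRfun]; exact hasFDerivAt_primitive hgc hg
  have hRcont : Continuous R := by
    rw [hRfun]
    exact continuous_parametric_primitive_of_continuous (f := fun (x : ℝ) (s : ℝ) => g (x, s))
      (μ := volume) (a₀ := 0) hgc
  -- notation
  set c : ℝ → ℝ → ℝ × ℝ := fun h' t =>
    (Real.sqrt (2*h') * Real.sin t, Real.sqrt (2*h') * Real.cos t) with hc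
  set F' : ℝ → ℝ → ℝ := fun h' t =>
    (Lmap g (c h' t)) ((Real.sqrt (2*h'))⁻¹ * Real.sin t, (Real.sqrt (2*h'))⁻¹ * Real.cos t) *
        (Real.sqrt (2*h') * Real.cos t) +
      R (c h' t) * ((Real.sqrt (2*h'))⁻¹ * Real.cos t) with hF'
  have hrpos : 0 < Real.sqrt (2*h) := Real.sqrt_pos.2 (by linarith)
  -- derivative of sqrt(2 h')
  have hsqrt : ∀ h' : ℝ, 0 < h' →
      HasDerivAt (fun x : ℝ => Real.sqrt (2*x)) ((Real.sqrt (2*h'))⁻¹) h' := by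
    intro h' hh'
    have h1 : HasDerivAt (fun x : ℝ => 2*x) 2 h' := by
      simpa using (hasDerivAt_id h').const_mul 2
    have h2 := (Real.hasDerivAt_sqrt (ne_of_gt (by linarith : (0:ℝ) < 2*h'))).comp h' h1
    have h3 : 1 / (2 * Real.sqrt (2*h')) * 2 = (Real.sqrt (2*h'))⁻¹ := by
      have : Real.sqrt (2*h') ≠ 0 := ne_of_gt (Real.sqrt_pos.2 (by linarith))
      field_simp
    rw [h3] at h2
    exact h2
  -- pointwise derivative in h'
  have hdiff : ∀ t : ℝ, ∀ h' ∈ Metric.ball h (h/2),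
      HasDerivAt (fun h'' => R (c h'' t) * (Real.sqrt (2*h'') * Real.cos t)) (F' h' t) h' := by
    intro t h' hb
    have hh' : 0 < h' := by
      rw [Metric.mem_ball, Real.dist_eq, abs_lt] at hb; linarith [hb.1]
    have hs := hsqrt h' hh'
    have hcurve : HasDerivAt (fun h'' => c h'' t)
        ((Real.sqrt (2*h'))⁻¹ * Real.sin t, (Real.sqrt (2*h'))⁻¹ * Real.cos t) h' :=
      (hs.mul_const (Real.sin t)).prodMk (hs.mul_const (Real.cos t))
    have hRc : HasDerivAt (fun h'' => R (c h'' t))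
        ((Lmap g (c h' t)) ((Real.sqrt (2*h'))⁻¹ * Real.sin t, (Real.sqrt (2*h'))⁻¹ * Real.cos t))
        h' := (hL (c h' t)).comp_hasDerivAt h' hcurve
    exact hRc.mul (hs.mul_const (Real.cos t))
  -- continuity of F' as a function of both variables, on a compact set
  have hLcont : Continuous (Lmap g) := Lmap_cont hgc hg
  have hF'cont : ContinuousOn (fun z : ℝ × ℝ => F' z.1 z.2)
      (Set.Icc (h/2) (3*h/2) ×ˢ Set.Icc 0 (π/2)) := by
    have hsc : Continuous fun z : ℝ × ℝ => Real.sqrt (2*z.1) := by fun_prop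
    have hsinv : ContinuousOn (fun z : ℝ × ℝ => (Real.sqrt (2*z.1))⁻¹)
        (Set.Icc (h/2) (3*h/2) ×ˢ Set.Icc 0 (π/2)) := by
      apply ContinuousOn.inv₀ hsc.continuousOn
      intro z hz
      have : h/2 ≤ z.1 := hz.1.1
      exact ne_of_gt (Real.sqrt_pos.2 (by linarith))
    have hccont : Continuous fun z : ℝ × ℝ => c z.1 z.2 := by
      simp only [hc]; fun_prop
    apply ContinuousOn.add
    · apply ContinuousOn.mul
      · apply ContinuousOn.clm_apply (((hLcont.comp hccont)).continuousOn)
        exact (hsinv.mul (by fun_prop)).prodMk (hsinv.mul (by fun_prop))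
      · fun_prop
    · exact ((hRcont.comp hccont).continuousOn).mul (hsinv.mul (by fun_prop))
  obtain ⟨C, hC⟩ := (isCompact_Icc.prod isCompact_Icc).exists_bound_of_continuousOn hF'cont
  have hIoc : Set.uIoc (0:ℝ) (π/2) = Set.Ioc 0 (π/2) := Set.uIoc_of_le (by positivity)
  -- the dominated-derivative theorem
  have hmeasF : ∀ h' : ℝ, Continuous fun t =>
      R (c h' t) * (Real.sqrt (2*h') * Real.cos t) := by
    intro h'
    exact ((hRcont.comp (by fun_prop)).mul (by fun_prop))
  have hmeasF' : Continuous fun t => F' h t := by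
    simp only [hF']
    apply Continuous.add
    · apply Continuous.mul ?_ (by fun_prop)
      apply Continuous.clm_apply (hLcont.comp (by fun_prop))
      fun_prop
    · exact (hRcont.comp (by fun_prop)).mul (by fun_prop)
  have key := intervalIntegral.hasDerivAt_integral_of_dominated_loc_of_deriv_le
    (𝕜 := ℝ) (μ := volume) (a := 0) (b := π/2)
    (F := fun h' t => R (c h' t) * (Real.sqrt (2*h') * Real.cos t))
    (F' := F') (x₀ := h) (bound := fun _ => C) (s := Metric.ball h (h/2)) (ball_mem_nhds h (by linarith))
    (Filter.Eventually.of_forall fun h' => (hmeasF h').aestronglyMeasurable)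
    ((hmeasF h).intervalIntegrable _ _)
    (hmeasF'.aestronglyMeasurable)
    (Filter.Eventually.of_forall fun t ht h' hb => by
      refine hC (h', t) ⟨?_, ?_⟩
      · rw [Metric.mem_ball, Real.dist_eq, abs_lt] at hb
        constructor <;> [linarith [hb.1]; linarith [hb.2]]
      · rw [hIoc] at ht; exact ⟨ht.1.le, ht.2⟩)
    intervalIntegrable_const
    (Filter.Eventually.of_forall fun t ht h' hb => hdiff t h' hb)
  obtain ⟨hF'int, hder⟩ := key
  -- now compute the integral of F' h
  set u : ℝ → ℝ := fun t => Real.sin t * R (c h t) * (Real.sqrt (2*h))⁻¹ with hu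
  set w : ℝ → ℝ := fun t =>
    (Real.cos t * R (c h t) +
      Real.sin t * ((Lmap g (c h t)) (Real.sqrt (2*h) * Real.cos t,
        Real.sqrt (2*h) * (-Real.sin t)))) * (Real.sqrt (2*h))⁻¹ with hw
  have hud : ∀ t : ℝ, HasDerivAt u (w t) t := by
    intro t
    have hcurve : HasDerivAt (fun t => c h t)
        (Real.sqrt (2*h) * Real.cos t, Real.sqrt (2*h) * (-Real.sin t)) t :=
      ((Real.hasDerivAt_sin t).const_mul (Real.sqrt (2*h))).prodMk
        ((Real.hasDerivAt_cos t).const_mul (Real.sqrt (2*h)))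
    have hRc : HasDerivAt (fun t => R (c h t))
        ((Lmap g (c h t)) (Real.sqrt (2*h) * Real.cos t, Real.sqrt (2*h) * (-Real.sin t))) t :=
      (hL (c h t)).comp_hasDerivAt t hcurve
    exact ((Real.hasDerivAt_sin t).mul hRc).mul_const (Real.sqrt (2*h))⁻¹
  have hweq : ∀ t : ℝ, F' h t = w t + g (c h t) := by
    intro t
    have hY : (Lmap g (c h t)) (0, 1) = g (c h t) := Lmap_apply_eb hgc hg (c h t)
    have hrne : Real.sqrt (2*h) ≠ 0 := ne_of_gt hrpos
    have hinv : Real.sqrt (2*h) * (Real.sqrt (2*h))⁻¹ = 1 := mul_inv_cancel₀ hrne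
    simp only [hF', hw]
    rw [clm_pair (Lmap g (c h t)) ((Real.sqrt (2*h))⁻¹ * Real.sin t)
        ((Real.sqrt (2*h))⁻¹ * Real.cos t),
      clm_pair (Lmap g (c h t)) (Real.sqrt (2*h) * Real.cos t)
        (Real.sqrt (2*h) * (-Real.sin t)), hY]
    have hsc := Real.sin_sq_add_cos_sq t
    linear_combination (g (c h t) * ((Real.sqrt (2*h))⁻¹ * Real.sqrt (2*h))) * hsc +
      g (c h t) * hinv
  have hgcc : Continuous fun t => g (c h t) := by fun_prop
  have hgint : IntervalIntegrable (fun t => g (c h t)) volume 0 (π/2) :=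
    hgcc.intervalIntegrable _ _
  have hwint : IntervalIntegrable w volume 0 (π/2) := by
    have : w = fun t => F' h t - g (c h t) := funext fun t => by rw [hweq t]; ring
    rw [this]
    exact hF'int.sub hgint
  have hiw : (∫ t in (0:ℝ)..(π/2), w t) = u (π/2) - u 0 :=
    intervalIntegral.integral_eq_sub_of_hasDerivAt (fun t _ => hud t) hwint
  have hu0 : u 0 = 0 := by simp [hu]
  have huved : u (π/2) = 0 := by
    have : R (c h (π/2)) = 0 := by
      simp only [hc, Real.cos_pi_div_two, mul_zero, Real.sin_pi_div_two, mul_one]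
      rw [hR]
      simp
    simp [hu, this]
  have hfinal : (∫ t in (0:ℝ)..(π/2), F' h t) = M h := by
    calc (∫ t in (0:ℝ)..(π/2), F' h t)
        = ∫ t in (0:ℝ)..(π/2), (w t + g (c h t)) :=
          intervalIntegral.integral_congr (fun t _ => hweq t)
      _ = (∫ t in (0:ℝ)..(π/2), w t) + ∫ t in (0:ℝ)..(π/2), g (c h t) :=
          intervalIntegral.integral_add hwint hgint
      _ = M h := by rw [hiw, hu0, huved, hM h]; simp [hc]
  have hMbarfun : Mbar = fun h' => ∫ t in (0:ℝ)..(π/2),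
      R (c h' t) * (Real.sqrt (2*h') * Real.cos t) := funext fun h' => hMbar h'
  rw [hMbarfun, ← hfinal]
  exact hder
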